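/- There is an l-total property Q, computable in the limit, that enumerates without repetition the indices of partial recursive functions that are not total: for every n there is a unique x such that Q(n) = x, φ_x is not total, and every non-total partial recursive function has some index appearing as a value Q(n). -/

import Mathlib

open Nat.Partrec (Code)

/-- `φ i` is the partial recursive function with index `i`. -/
def φ (i : ℕ) : ℕ →. ℕ := (Denumerable.ofNat Code i).eval

/-- `LConv ψ x v`: the guessing function `ψ` on input `x` l-converges in the limit to `v`:
there is a `u` with `ψ x u = v` and for all `t > u`, `ψ x t = v` whenever it converges. -/
def LConv (ψ : ℕ → ℕ →. ℕ) (x v : ℕ) : Prop :=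
  ∃ u, v ∈ ψ x u ∧ ∀ t, u < t → ∀ w ∈ ψ x t, w = v

/-- The master function: on input `m = ⟨⟨j,k⟩,x⟩`, diverge if `x = k`, else compute `φ j x`. -/
def masterFn : ℕ →. ℕ := fun m =>
  bif m.unpair.2 == m.unpair.1.unpair.2 then Part.none
  else φ m.unpair.1.unpair.1 m.unpair.2

theorem masterFn_partrec : Partrec masterFn := by
  have hc : Computable fun m : ℕ => m.unpair.2 == m.unpair.1.unpair.2 := by
    have h1 : Primrec fun m : ℕ => m.unpair.2 := Primrec.snd.comp Primrec.unpair
    have h2 : Primrec fun m : ℕ => m.unpair.1.unpair.2 :=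
      Primrec.snd.comp (Primrec.unpair.comp (Primrec.fst.comp Primrec.unpair))
    exact (Primrec.eq.comp h1 h2).decide.to_comp
  have hg : Partrec fun m : ℕ => φ m.unpair.1.unpair.1 m.unpair.2 := by
    have h1 : Computable fun m : ℕ => Denumerable.ofNat Code m.unpair.1.unpair.1 :=
      (Computable.ofNat Code).comp
        ((Primrec.fst.comp (Primrec.unpair.comp (Primrec.fst.comp Primrec.unpair))).to_comp)
    have h2 : Computable fun m : ℕ => m.unpair.2 :=
      (Primrec.snd.comp Primrec.unpair).to_comp
    exact Nat.Partrec.Code.eval_part.comp h1 h2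
  exact Partrec.cond hc Partrec.none hg

theorem stmt6 : ∃ (Q : ℕ → ℕ) (ψ : ℕ → ℕ →. ℕ), Partrec₂ ψ ∧
    (∀ n, LConv ψ n (Q n)) ∧
    Function.Injective Q ∧
    (∀ n, ¬ ∀ m, ((φ (Q n)) m).Dom) ∧
    (∀ j, (¬ ∀ m, ((φ j) m).Dom) → ∃ n, ∀ m, φ (Q n) m = φ j m) := by
  obtain ⟨c, hc⟩ := Nat.Partrec.Code.exists_code.1 (Partrec.nat_iff.1 masterFn_partrec)
  set Q : ℕ → ℕ := fun n => Encodable.encode (Nat.Partrec.Code.curry c n) with hQ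
  have hφQ : ∀ n x, φ (Q n) x =
      (bif x == n.unpair.2 then Part.none else φ n.unpair.1 x) := by
    intro n x
    have : φ (Q n) x = Nat.Partrec.Code.eval (Nat.Partrec.Code.curry c n) x := by
      simp [φ, hQ, Denumerable.ofNat_encode]
    rw [this, Nat.Partrec.Code.eval_curry, hc]
    simp [masterFn, Nat.unpair_pair]
  refine ⟨Q, fun n _ => Part.some (Q n), ?_, ?_, ?_, ?_, ?_⟩
  · have : Computable fun p : ℕ × ℕ => Q p.1 :=
      Primrec.to_comp (Primrec.encode.comp
        ((Nat.Partrec.Code.primrec₂_curry.comp (Primrec.const c) Primrec.id).comp Primrec.fst))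
    exact this.partrec
  · intro n
    exact ⟨0, Part.mem_some _, fun t _ w hw => (Part.mem_some_iff.1 hw)⟩
  · intro a b hab
    have := Encodable.encode_injective hab
    exact (Nat.Partrec.Code.curry_inj this).2
  · intro n h
    have := h n.unpair.2
    rw [hφQ] at this
    simp at this
  · intro j hj
    push_neg at hj
    obtain ⟨k, hk⟩ := hj
    refine ⟨Nat.pair j k, fun m => ?_⟩
    rw [hφQ]
    simp only [Nat.unpair_pair]
    by_cases hm : m = k
    · subst hm
      simp [Part.eq_none_iff'.2 hk]
    · have hb : (m == k) = false := by simpa using hm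
      rw [hb, Bool.cond_false]
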